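/- arXiv:1305.3456 — 7 statements merged into one kernel-verified Lean document; each statement's English description precedes it below -/
import Mathlib

section
/- Let W be a symmetric q×q real matrix, let α₁, α₂ : [0,∞) → [0,∞) be class K functions, and set ᾱ(r) := min(α₁(r), α₂(r)). Let S₁, S₂ : [0,∞) → [0,∞) be differentiable and let δy₁, δy₂, δv₁, δv₂ : [0,∞) → ℝ^q. Assume that for all t ≥ 0: S₁'(t) ≤ −α₁(S₁(t)) + δy₁(t)ᵀ W (−δy₂(t) + δv₁(t)) and S₂'(t) ≤ −α₂(S₂(t)) + δy₂(t)ᵀ W (δy₁(t) + δv₂(t)). Then for all t ≥ 0: (S₁ + S₂)'(t) ≤ −ᾱ((S₁(t) + S₂(t))/2) + δy₁(t)ᵀ W δv₁(t) + δy₂(t)ᵀ W δv₂(t). -/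
open Matrix

/-- A function `α : [0,∞) → [0,∞)` (modeled as a function `ℝ → ℝ` that is nonnegative
on `[0,∞)`) is of class `K` if it is locally Lipschitz on `[0,∞)`, strictly increasing
on `[0,∞)`, and `α 0 = 0`. -/
def IsClassK (α : ℝ → ℝ) : Prop :=
  LocallyLipschitzOn (Set.Ici 0) α ∧ StrictMonoOn α (Set.Ici 0) ∧ α 0 = 0 ∧
    ∀ r : ℝ, 0 ≤ r → 0 ≤ α r

lemma symm_swap {q : ℕ} {W : Matrix (Fin q) (Fin q) ℝ} (hW : W.IsSymm)
    (a b : Fin q → ℝ) : a ⬝ᵥ W.mulVec b = b ⬝ᵥ W.mulVec a := by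
  rw [Matrix.dotProduct_mulVec, ← Matrix.mulVec_transpose, hW.eq, dotProduct_comm]

/-- Feedback interconnection of two strictly uniformly differentially passive systems
(through `u₁ = -y₂ + v₁`, `u₂ = y₁ + v₂`, with constant symmetric tensor `W`) is
strictly uniformly differentially passive with storage `S₁ + S₂` and
class-`K` lower rate `ᾱ(r) = min (α₁ r) (α₂ r)`. -/
theorem stmt_2 {q : ℕ} (W : Matrix (Fin q) (Fin q) ℝ) (hW : W.IsSymm)
    (α₁ α₂ : ℝ → ℝ) (hα₁ : IsClassK α₁) (hα₂ : IsClassK α₂)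
    (S₁ S₂ : ℝ → ℝ)
    (hS₁nonneg : ∀ t : ℝ, 0 ≤ t → 0 ≤ S₁ t) (hS₂nonneg : ∀ t : ℝ, 0 ≤ t → 0 ≤ S₂ t)
    (hS₁diff : ∀ t : ℝ, 0 ≤ t → DifferentiableWithinAt ℝ S₁ (Set.Ici 0) t)
    (hS₂diff : ∀ t : ℝ, 0 ≤ t → DifferentiableWithinAt ℝ S₂ (Set.Ici 0) t)
    (δy₁ δy₂ δv₁ δv₂ : ℝ → (Fin q → ℝ))
    (h₁ : ∀ t : ℝ, 0 ≤ t → derivWithin S₁ (Set.Ici 0) t ≤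
      -α₁ (S₁ t) + δy₁ t ⬝ᵥ W.mulVec (-δy₂ t + δv₁ t))
    (h₂ : ∀ t : ℝ, 0 ≤ t → derivWithin S₂ (Set.Ici 0) t ≤
      -α₂ (S₂ t) + δy₂ t ⬝ᵥ W.mulVec (δy₁ t + δv₂ t)) :
    ∀ t : ℝ, 0 ≤ t → derivWithin (fun τ => S₁ τ + S₂ τ) (Set.Ici 0) t ≤
      -(min (α₁ ((S₁ t + S₂ t) / 2)) (α₂ ((S₁ t + S₂ t) / 2)))
        + δy₁ t ⬝ᵥ W.mulVec (δv₁ t) + δy₂ t ⬝ᵥ W.mulVec (δv₂ t) := by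
  intro t ht
  have hud : UniqueDiffWithinAt ℝ (Set.Ici (0:ℝ)) t :=
    uniqueDiffOn_Ici 0 t ht
  rw [derivWithin_fun_add (hS₁diff t ht) (hS₂diff t ht)]
  have hcross : δy₁ t ⬝ᵥ W.mulVec (-δy₂ t + δv₁ t) +
      δy₂ t ⬝ᵥ W.mulVec (δy₁ t + δv₂ t) =
      δy₁ t ⬝ᵥ W.mulVec (δv₁ t) + δy₂ t ⬝ᵥ W.mulVec (δv₂ t) := by
    rw [Matrix.mulVec_add, Matrix.mulVec_add, dotProduct_add,
      dotProduct_add, Matrix.mulVec_neg, dotProduct_neg,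
      symm_swap hW (δy₂ t) (δy₁ t)]
    ring
  have key : min (α₁ ((S₁ t + S₂ t) / 2)) (α₂ ((S₁ t + S₂ t) / 2)) ≤
      α₁ (S₁ t) + α₂ (S₂ t) := by
    have hs1 := hS₁nonneg t ht
    have hs2 := hS₂nonneg t ht
    rcases le_total (S₁ t) (S₂ t) with h | h
    · have hle : (S₁ t + S₂ t) / 2 ≤ S₂ t := by linarith
      have h2 : α₂ ((S₁ t + S₂ t) / 2) ≤ α₂ (S₂ t) :=
        hα₂.2.1.monotoneOn (Set.mem_Ici.mpr (by positivity)) (by simpa using hs2) hle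
      have := hα₁.2.2.2 (S₁ t) hs1
      calc min (α₁ ((S₁ t + S₂ t) / 2)) (α₂ ((S₁ t + S₂ t) / 2)) ≤
          α₂ ((S₁ t + S₂ t) / 2) := min_le_right _ _
        _ ≤ α₁ (S₁ t) + α₂ (S₂ t) := by linarith
    · have hle : (S₁ t + S₂ t) / 2 ≤ S₁ t := by linarith
      have h1 : α₁ ((S₁ t + S₂ t) / 2) ≤ α₁ (S₁ t) :=
        hα₁.2.1.monotoneOn (Set.mem_Ici.mpr (by positivity)) (by simpa using hs1) hle
      have := hα₂.2.2.2 (S₂ t) hs2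
      calc min (α₁ ((S₁ t + S₂ t) / 2)) (α₂ ((S₁ t + S₂ t) / 2)) ≤
          α₁ ((S₁ t + S₂ t) / 2) := min_le_left _ _
        _ ≤ α₁ (S₁ t) + α₂ (S₂ t) := by linarith
  have := add_le_add (h₁ t ht) (h₂ t ht)
  linarith [this, hcross]
end

section
/- Let f : ℝⁿ → ℝⁿ, g : ℝⁿ → ℝ^{n×q}, h : ℝⁿ → ℝ^q be continuously differentiable, let m : ℝⁿ → ℝ be three times continuously differentiable with Hessian M(x) := ∇²m(x) (a symmetric n×n matrix), let W : ℝⁿ → ℝ^{q×q}, and let Π ∈ ℝ^{n×q} be a constant matrix. Assume: (i) for all x, v ∈ ℝⁿ, vᵀ M(x) J_{Mf}(x) v ≤ 0, where J_{Mf}(x) is the Jacobian at x of the map z ↦ M(z) f(z); (ii) M(x) g(x) = Π for all x; (iii) J_h(x)ᵀ W(x) = M(x) Π for all x, where J_h is the Jacobian of h. Then for every continuously differentiable x, δx : ℝ → ℝⁿ and continuous u, δu : ℝ → ℝ^q satisfying, for all t, ẋ(t) = f(x(t)) + g(x(t)) u(t) and δẋ(t) = J_f(x(t)) δx(t) + J_{g·u(t)}(x(t))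 δx(t) + g(x(t)) δu(t) — where J_{g·v}(x) denotes the Jacobian at x of the map z ↦ g(z) v — the function S(t) := (1/2) δx(t)ᵀ M(x(t))² δx(t) satisfies S'(t) ≤ δy(t)ᵀ W(x(t)) δu(t) for all t, where δy(t) := J_h(x(t)) δx(t). -/
open Matrix

attribute [local instance] Matrix.normedAddCommGroup Matrix.normedSpace

/-- The Jacobian matrix at `x` of a map `F : ℝⁿ → ℝᵐ`: entry `(i, j)` is the
derivative of the `i`-th component of `F` in the direction of the `j`-th basis vector. -/
noncomputable def jac {n m : ℕ} (F : (Fin n → ℝ) → (Fin m → ℝ)) (x : Fin n → ℝ) :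
    Matrix (Fin m) (Fin n) ℝ :=
  Matrix.of fun i j => fderiv ℝ F x (Pi.single j (1 : ℝ)) i

/-- The Hessian matrix of `m : ℝⁿ → ℝ` at `x`. -/
noncomputable def hess {n : ℕ} (m : (Fin n → ℝ) → ℝ) (x : Fin n → ℝ) :
    Matrix (Fin n) (Fin n) ℝ :=
  Matrix.of fun i j => fderiv ℝ (fun z => fderiv ℝ m z (Pi.single j (1 : ℝ))) x
    (Pi.single i (1 : ℝ))

/- ## Auxiliary machinery -/

lemma clm_app_sum {n : ℕ} {F : Type*} [NormedAddCommGroup F] [NormedSpace ℝ F]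
    (T : (Fin n → ℝ) →L[ℝ] F) (v : Fin n → ℝ) :
    T v = ∑ j, v j • T (Pi.single j (1:ℝ)) := by
  have hv : (∑ j, v j • (Pi.single j 1 : Fin n → ℝ)) = v := by
    funext k
    simp [Finset.sum_apply, Pi.single_apply]
  conv_lhs => rw [← hv]
  simp

lemma hasFDerivAt_fderiv_app {E F : Type*} [NormedAddCommGroup E] [NormedSpace ℝ E]
    [NormedAddCommGroup F] [NormedSpace ℝ F]
    {φ : E → F} {x : E} (hφ : DifferentiableAt ℝ (fderiv ℝ φ) x) (v : E) :
    HasFDerivAt (fun z => fderiv ℝ φ z v)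
      ((ContinuousLinearMap.apply ℝ F v).comp (fderiv ℝ (fderiv ℝ φ) x)) x :=
  (ContinuousLinearMap.apply ℝ F v).hasFDerivAt.comp x hφ.hasFDerivAt

lemma sym2 {E : Type*} [NormedAddCommGroup E] [NormedSpace ℝ E]
    {φ : E → ℝ} (hφ : ContDiff ℝ 2 φ) (x v w : E) :
    fderiv ℝ (fun z => fderiv ℝ φ z v) x w = fderiv ℝ (fun z => fderiv ℝ φ z w) x v := by
  have hd : DifferentiableAt ℝ (fderiv ℝ φ) x :=
    ((hφ.fderiv_right (m := 1) (by norm_num)).differentiable one_ne_zero).differentiableAt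
  rw [(hasFDerivAt_fderiv_app hd v).fderiv, (hasFDerivAt_fderiv_app hd w).fderiv]
  have hsym := second_derivative_symmetric
    (fun y => ((hφ.differentiable (by norm_num)) y).hasFDerivAt) hd.hasFDerivAt w v
  simpa using hsym

/-- The second-derivative bilinear form of `m`. -/
noncomputable def Afn {n : ℕ} (m : (Fin n → ℝ) → ℝ) (z v w : Fin n → ℝ) : ℝ :=
  fderiv ℝ (fun y => fderiv ℝ m y w) z v

/-- The third-derivative trilinear form of `m`. -/
noncomputable def Bfn {n : ℕ} (m : (Fin n → ℝ) → ℝ) (x a v w : Fin n → ℝ) : ℝ :=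
  fderiv ℝ (fun z => Afn m z v w) x a

section Sym
variable {n : ℕ} {m : (Fin n → ℝ) → ℝ}

lemma psi_contDiff (hm : ContDiff ℝ 3 m) (w : Fin n → ℝ) :
    ContDiff ℝ 2 (fun y => fderiv ℝ m y w) :=
  (hm.fderiv_right (by norm_num)).clm_apply contDiff_const

lemma Afn_contDiff (hm : ContDiff ℝ 3 m) (v w : Fin n → ℝ) :
    ContDiff ℝ 1 (fun z => Afn m z v w) :=
  ((psi_contDiff hm w).fderiv_right (by norm_num)).clm_apply contDiff_const

lemma Afn_symm (hm : ContDiff ℝ 3 m) (z v w : Fin n → ℝ) :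
    Afn m z v w = Afn m z w v :=
  sym2 (hm.of_le (by norm_num)) z w v

lemma Bfn_swap12 (hm : ContDiff ℝ 3 m) (x a v w : Fin n → ℝ) :
    Bfn m x a v w = Bfn m x v a w :=
  sym2 (psi_contDiff hm w) x v a

lemma Bfn_swap23 (hm : ContDiff ℝ 3 m) (x a v w : Fin n → ℝ) :
    Bfn m x a v w = Bfn m x a w v := by
  unfold Bfn
  have h : (fun z => Afn m z v w) = (fun z => Afn m z w v) :=
    funext fun z => Afn_symm hm z v w
  rw [h]

lemma Bfn_swap13 (hm : ContDiff ℝ 3 m) (x a v w : Fin n → ℝ) :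
    Bfn m x a v w = Bfn m x w v a := by
  rw [Bfn_swap12 hm, Bfn_swap23 hm, Bfn_swap12 hm, Bfn_swap23 hm]

lemma Bfn_sum (x a v w : Fin n → ℝ) :
    Bfn m x a v w = ∑ k, a k * Bfn m x (Pi.single k 1) v w := by
  have h := clm_app_sum (fderiv ℝ (fun z => Afn m z v w) x) a
  simpa [Bfn] using h

end Sym

lemma jac_mulVec {n m : ℕ} (F : (Fin n → ℝ) → (Fin m → ℝ)) (x v : Fin n → ℝ) :
    (jac F x).mulVec v = fderiv ℝ F x v := by
  funext i
  rw [clm_app_sum (fderiv ℝ F x) v]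
  simp [Matrix.mulVec, dotProduct, jac, Finset.sum_apply, mul_comm]

lemma fderiv_proj {n p : ℕ} {F : (Fin n → ℝ) → (Fin p → ℝ)} {X : Fin n → ℝ}
    (hF : DifferentiableAt ℝ F X) (d : Fin n → ℝ) (i : Fin p) :
    fderiv ℝ F X d i = fderiv ℝ (fun z => F z i) X d := by
  have h := ((ContinuousLinearMap.proj (R := ℝ) (φ := fun _ : Fin p => ℝ) i).hasFDerivAt.comp
    X hF.hasFDerivAt).fderiv
  rw [show (fun z => F z i) = (ContinuousLinearMap.proj (R := ℝ) (φ := fun _ : Fin p => ℝ) i) ∘ F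
    from rfl, h]
  rfl

/-- product-rule for a finite sum of scalar products. -/
lemma fderiv_sum_mul {n : ℕ} {E : Type*} [NormedAddCommGroup E] [NormedSpace ℝ E]
    {X : E} (a c : Fin n → E → ℝ)
    (ha : ∀ k, DifferentiableAt ℝ (a k) X) (hc : ∀ k, DifferentiableAt ℝ (c k) X) (d : E) :
    fderiv ℝ (fun z => ∑ k, a k z * c k z) X d
      = ∑ k, (fderiv ℝ (a k) X d * c k X + a k X * fderiv ℝ (c k) X d) := by
  have h : HasFDerivAt (fun z => ∑ k, a k z * c k z)
      (∑ k, (a k X • fderiv ℝ (c k) X + c k X • fderiv ℝ (a k) X)) X :=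
    HasFDerivAt.fun_sum fun k _ => ((ha k).hasFDerivAt.mul (hc k).hasFDerivAt)
  rw [h.fderiv]
  simp only [ContinuousLinearMap.coe_sum', Finset.sum_apply, ContinuousLinearMap.add_apply,
    ContinuousLinearMap.coe_smul', Pi.smul_apply, smul_eq_mul]
  exact Finset.sum_congr rfl fun k _ => by ring

lemma mulVec_dot {a b : ℕ} (A : Matrix (Fin a) (Fin b) ℝ) (x : Fin b → ℝ) (y : Fin a → ℝ) :
    (A *ᵥ x) ⬝ᵥ y = x ⬝ᵥ (Aᵀ *ᵥ y) := by
  rw [dotProduct_comm, Matrix.dotProduct_mulVec, ← Matrix.mulVec_transpose,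
    dotProduct_comm]

lemma dot_transpose {a : ℕ} (A : Matrix (Fin a) (Fin a) ℝ) (x y : Fin a → ℝ) :
    x ⬝ᵥ A *ᵥ y = y ⬝ᵥ Aᵀ *ᵥ x := by
  rw [Matrix.dotProduct_mulVec, ← Matrix.mulVec_transpose, dotProduct_comm]
/-- Differential passivity of the input-affine system `ẋ = f(x) + g(x)u`, `y = h(x)`
with differential storage `S = ½ δxᵀ M(x)ᵀ M(x) δx`, `M(x) = ∇²m(x)`, under the
conditions `M M f`-contraction, `M g = Π`, `J_hᵀ W = M Π`. -/
theorem stmt_4 {n q : ℕ}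
    (f : (Fin n → ℝ) → (Fin n → ℝ)) (g : (Fin n → ℝ) → Matrix (Fin n) (Fin q) ℝ)
    (h : (Fin n → ℝ) → (Fin q → ℝ)) (m : (Fin n → ℝ) → ℝ)
    (W : (Fin n → ℝ) → Matrix (Fin q) (Fin q) ℝ) (PI : Matrix (Fin n) (Fin q) ℝ)
    (hf : ContDiff ℝ 1 f) (hg : ContDiff ℝ 1 g) (hh : ContDiff ℝ 1 h)
    (hm : ContDiff ℝ 3 m)
    (M : (Fin n → ℝ) → Matrix (Fin n) (Fin n) ℝ) (hM : ∀ x, M x = hess m x)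
    (cond1 : ∀ (x v : Fin n → ℝ),
      v ⬝ᵥ (M x).mulVec ((jac (fun z => (M z).mulVec (f z)) x).mulVec v) ≤ 0)
    (cond2 : ∀ x, M x * g x = PI)
    (cond3 : ∀ x, (jac h x)ᵀ * W x = M x * PI)
    (x δx : ℝ → (Fin n → ℝ)) (u δu : ℝ → (Fin q → ℝ))
    (hu : Continuous u) (hδu : Continuous δu)
    (hx : ∀ t : ℝ, HasDerivAt x (f (x t) + (g (x t)).mulVec (u t)) t)
    (hδx : ∀ t : ℝ, HasDerivAt δx
      ((jac f (x t)).mulVec (δx t) + (jac (fun z => (g z).mulVec (u t)) (x t)).mulVec (δx t)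
        + (g (x t)).mulVec (δu t)) t)
    (S : ℝ → ℝ)
    (hS : ∀ t : ℝ, S t = (1 / 2) * (δx t ⬝ᵥ (M (x t) * M (x t)).mulVec (δx t)))
    (δy : ℝ → (Fin q → ℝ)) (hδy : ∀ t : ℝ, δy t = (jac h (x t)).mulVec (δx t)) :
    ∀ t : ℝ, deriv S t ≤ δy t ⬝ᵥ (W (x t)).mulVec (δu t) := by
  intro t
  classical
  set X := x t with hXdef
  set v := δx t with hvdef
  set w := f X + (g X) *ᵥ (u t) with hwdef
  -- entry formula for M
  have hMA : ∀ (z : Fin n → ℝ) i j, M z i j = Afn m z (Pi.single i 1) (Pi.single j 1) := by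
    intro z i j; rw [hM]; rfl
  have hAc : ∀ (vv ww : Fin n → ℝ), ContDiff ℝ 1 (fun z => Afn m z vv ww) := Afn_contDiff hm
  -- symmetry of M
  have hMsym : ∀ z, (M z)ᵀ = M z := by
    intro z; ext i j
    rw [Matrix.transpose_apply, hMA, hMA]
    exact Afn_symm hm z _ _
  -- third-derivative matrix along the trajectory
  set Ad : Matrix (Fin n) (Fin n) ℝ :=
    Matrix.of (fun i j => Bfn m X w (Pi.single i 1) (Pi.single j 1)) with hAddef
  have hAdsym : Adᵀ = Ad := by
    ext i j
    show Bfn m X w (Pi.single j 1) (Pi.single i 1) = Bfn m X w (Pi.single i 1) (Pi.single j 1)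
    exact (Bfn_swap23 hm X w _ _).symm
  -- entries of M along x are differentiable
  have hMd : ∀ i j, HasDerivAt (fun s => M (x s) i j) (Ad i j) t := by
    intro i j
    have h1 : (fun s => M (x s) i j)
        = (fun z => Afn m z (Pi.single i 1) (Pi.single j 1)) ∘ x := by
      funext s; rw [Function.comp_apply, hMA]
    rw [h1]
    exact (((hAc (Pi.single i 1) (Pi.single j 1)).differentiable
      one_ne_zero X).hasFDerivAt).comp_hasDerivAt t (hx t)
  -- components of δx
  set VD := (jac f X) *ᵥ v + (jac (fun z => (g z) *ᵥ (u t)) X) *ᵥ v + (g X) *ᵥ (δu t)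
    with hVDdef
  have hvd : ∀ i, HasDerivAt (fun s => δx s i) (VD i) t := by
    intro i
    exact (ContinuousLinearMap.proj (R := ℝ) (φ := fun _ : Fin n => ℝ)
      i).hasFDerivAt.comp_hasDerivAt t (hδx t)
  -- derivative of S
  have hform : S = fun s => 1/2 * ∑ i, δx s i *
      ∑ k, (∑ j, M (x s) i j * M (x s) j k) * δx s k := by
    funext s
    rw [hS s]
    simp [dotProduct, Matrix.mulVec, Matrix.mul_apply]
  have hSd : HasDerivAt S ((1:ℝ)/2 * ∑ i, (VD i * (∑ k, (∑ j, M X i j * M X j k) * v k)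
      + v i * (∑ k, ((∑ j, (Ad i j * M X j k + M X i j * Ad j k)) * v k
          + (∑ j, M X i j * M X j k) * VD k)))) t := by
    rw [hform]
    exact HasDerivAt.const_mul _ (HasDerivAt.fun_sum fun i _ =>
      (hvd i).mul (HasDerivAt.fun_sum fun k _ =>
        ((HasDerivAt.fun_sum fun j _ => (hMd i j).mul (hMd j k)).mul (hvd k))))
  -- matrix form of the derivative
  have hDalg : deriv S t = VD ⬝ᵥ (M X * M X) *ᵥ v + v ⬝ᵥ (M X * Ad) *ᵥ v := by
    rw [hSd.deriv]
    have expand : ((1:ℝ)/2 * ∑ i, (VD i * (∑ k, (∑ j, M X i j * M X j k) * v k)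
        + v i * (∑ k, ((∑ j, (Ad i j * M X j k + M X i j * Ad j k)) * v k
            + (∑ j, M X i j * M X j k) * VD k))))
        = 1/2 * ((VD ⬝ᵥ (M X * M X) *ᵥ v + v ⬝ᵥ (Ad * M X) *ᵥ v)
            + (v ⬝ᵥ (M X * Ad) *ᵥ v + v ⬝ᵥ (M X * M X) *ᵥ VD)) := by
      simp only [dotProduct, Matrix.mulVec, Matrix.mul_apply]
      rw [← Finset.sum_add_distrib, ← Finset.sum_add_distrib, ← Finset.sum_add_distrib]
      congr 1
      refine Finset.sum_congr rfl fun i _ => ?_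
      simp only [Finset.sum_add_distrib, add_mul, mul_add]
      ring
    rw [expand]
    have e1 : v ⬝ᵥ (Ad * M X) *ᵥ v = v ⬝ᵥ (M X * Ad) *ᵥ v := by
      rw [dot_transpose (Ad * M X) v v, Matrix.transpose_mul, hMsym, hAdsym]
    have e2 : v ⬝ᵥ (M X * M X) *ᵥ VD = VD ⬝ᵥ (M X * M X) *ᵥ v := by
      rw [dot_transpose, Matrix.transpose_mul, hMsym]
    rw [e1, e2]
    ring
  -- differentiability facts
  have hfk : ∀ k, ContDiff ℝ 1 (fun z => f z k) := fun k => contDiff_pi.mp hf k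
  have hgu : ∀ k, ContDiff ℝ 1 (fun z => ((g z) *ᵥ (u t)) k) := by
    intro k
    have hrw : (fun z => ((g z) *ᵥ (u t)) k) = fun z => ∑ j, g z k j * u t j := rfl
    rw [hrw]
    exact ContDiff.sum fun j _ => (contDiff_pi.mp (contDiff_pi.mp hg k) j).mul contDiff_const
  have hgud : DifferentiableAt ℝ (fun z => (g z) *ᵥ (u t)) X :=
    differentiableAt_pi.mpr fun k => ((hgu k).differentiable one_ne_zero X)
  have hfd : DifferentiableAt ℝ f X := hf.differentiable one_ne_zero X
  have hJ1 : ∀ k l, jac f X k l = fderiv ℝ (fun z => f z k) X (Pi.single l 1) :=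
    fun k l => fderiv_proj hfd _ k
  have hJ2 : ∀ k l, jac (fun z => (g z) *ᵥ (u t)) X k l
      = fderiv ℝ (fun z => ((g z) *ᵥ (u t)) k) X (Pi.single l 1) :=
    fun k l => fderiv_proj hgud _ k
  have hMfj : ∀ j, (fun z => ((M z) *ᵥ (f z)) j)
      = (fun z => ∑ k, Afn m z (Pi.single j 1) (Pi.single k 1) * f z k) := by
    intro j; funext z
    show ∑ k, M z j k * f z k = _
    exact Finset.sum_congr rfl fun k _ => by rw [hMA]
  have hMfd : DifferentiableAt ℝ (fun z => (M z) *ᵥ (f z)) X := by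
    refine differentiableAt_pi.mpr fun j => ?_
    rw [hMfj j]
    exact DifferentiableAt.fun_sum fun k _ =>
      (((hAc _ _).differentiable one_ne_zero X).mul ((hfk k).differentiable one_ne_zero X))
  -- the key matrix identity
  have CL : M X * jac f X + M X * jac (fun z => (g z) *ᵥ (u t)) X + Ad
      = jac (fun z => (M z) *ᵥ (f z)) X := by
    ext j l
    have hRHS : jac (fun z => (M z) *ᵥ (f z)) X j l
        = ∑ k, (Bfn m X (Pi.single l 1) (Pi.single j 1) (Pi.single k 1) * f X k
            + Afn m X (Pi.single j 1) (Pi.single k 1)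
              * fderiv ℝ (fun z => f z k) X (Pi.single l 1)) := by
      show fderiv ℝ (fun z => (M z) *ᵥ (f z)) X (Pi.single l 1) j = _
      rw [fderiv_proj hMfd, hMfj j]
      exact fderiv_sum_mul _ _ (fun k => (hAc _ _).differentiable one_ne_zero X)
        (fun k => (hfk k).differentiable one_ne_zero X) _
    have hI2 : (0:ℝ) = ∑ k, (Bfn m X (Pi.single l 1) (Pi.single j 1) (Pi.single k 1)
          * ((g X) *ᵥ (u t)) k
        + Afn m X (Pi.single j 1) (Pi.single k 1)
          * fderiv ℝ (fun z => ((g z) *ᵥ (u t)) k) X (Pi.single l 1)) := by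
      have h1 : (fun z => ∑ k, Afn m z (Pi.single j 1) (Pi.single k 1) * ((g z) *ᵥ (u t)) k)
          = (fun _ => (PI *ᵥ (u t)) j) := by
        funext z
        have h0 : ∑ k, Afn m z (Pi.single j 1) (Pi.single k 1) * ((g z) *ᵥ (u t)) k
            = ((M z) *ᵥ ((g z) *ᵥ (u t))) j :=
          (Finset.sum_congr rfl fun k _ => by simp only [hMA]).symm
        rw [h0, Matrix.mulVec_mulVec, cond2]
      have h2 := fderiv_sum_mul (X := X)
        (fun k z => Afn m z (Pi.single j 1) (Pi.single k 1))
        (fun k z => ((g z) *ᵥ (u t)) k)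
        (fun k => (hAc _ _).differentiable one_ne_zero X)
        (fun k => (hgu k).differentiable one_ne_zero X) (Pi.single l 1)
      have h0 : (0:ℝ) = fderiv ℝ (fun z => ∑ k, Afn m z (Pi.single j 1) (Pi.single k 1)
          * ((g z) *ᵥ (u t)) k) X (Pi.single l 1) := by
        rw [h1]; simp
      rw [h0]
      exact h2
    have hAdjl : Ad j l = ∑ k, (f X k + ((g X) *ᵥ (u t)) k)
        * Bfn m X (Pi.single l 1) (Pi.single j 1) (Pi.single k 1) := by
      show Bfn m X w (Pi.single j 1) (Pi.single l 1) = _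
      rw [Bfn_sum]
      refine Finset.sum_congr rfl fun k _ => ?_
      rw [Bfn_swap13 hm]
      simp only [hwdef, Pi.add_apply]
    have hL : (M X * jac f X + M X * jac (fun z => (g z) *ᵥ (u t)) X + Ad) j l
        = ∑ k, (Afn m X (Pi.single j 1) (Pi.single k 1)
              * fderiv ℝ (fun z => f z k) X (Pi.single l 1)
            + Afn m X (Pi.single j 1) (Pi.single k 1)
              * fderiv ℝ (fun z => ((g z) *ᵥ (u t)) k) X (Pi.single l 1)
            + (f X k + ((g X) *ᵥ (u t)) k)
              * Bfn m X (Pi.single l 1) (Pi.single j 1) (Pi.single k 1)) := by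
      simp only [Matrix.add_apply, Matrix.mul_apply]
      rw [hAdjl, ← Finset.sum_add_distrib, ← Finset.sum_add_distrib]
      refine Finset.sum_congr rfl fun k _ => ?_
      rw [hMA, hJ1, hJ2]
    rw [hL, hRHS, ← add_zero (∑ k, (Bfn m X (Pi.single l 1) (Pi.single j 1) (Pi.single k 1)
        * f X k + Afn m X (Pi.single j 1) (Pi.single k 1)
        * fderiv ℝ (fun z => f z k) X (Pi.single l 1))), hI2, ← Finset.sum_add_distrib]
    exact Finset.sum_congr rfl fun k _ => by ring
  -- the δu term
  have hduterm : ((g X) *ᵥ (δu t)) ⬝ᵥ (M X * M X) *ᵥ v = δy t ⬝ᵥ (W X) *ᵥ (δu t) := by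
    have hmat : (g X)ᵀ * (M X * M X) = (W X)ᵀ * jac h X := by
      calc (g X)ᵀ * (M X * M X) = ((g X)ᵀ * (M X)ᵀ) * M X := by
            rw [hMsym, Matrix.mul_assoc]
        _ = (M X * g X)ᵀ * M X := by rw [Matrix.transpose_mul]
        _ = PIᵀ * (M X)ᵀ := by rw [cond2, hMsym]
        _ = (M X * PI)ᵀ := by rw [Matrix.transpose_mul]
        _ = ((jac h X)ᵀ * W X)ᵀ := by rw [cond3]
        _ = (W X)ᵀ * jac h X := by rw [Matrix.transpose_mul, Matrix.transpose_transpose]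
    rw [mulVec_dot, Matrix.mulVec_mulVec, hmat, ← Matrix.mulVec_mulVec, hδy t,
      dotProduct_comm, mulVec_dot, Matrix.transpose_transpose]
  -- assemble
  rw [hDalg, hVDdef, add_dotProduct, add_dotProduct]
  have hcollect : (jac f X *ᵥ v) ⬝ᵥ (M X * M X) *ᵥ v
        + (jac (fun z => (g z) *ᵥ (u t)) X *ᵥ v) ⬝ᵥ (M X * M X) *ᵥ v
        + v ⬝ᵥ (M X * Ad) *ᵥ v
      = v ⬝ᵥ (M X) *ᵥ ((jac (fun z => (M z) *ᵥ (f z)) X) *ᵥ v) := by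
    have hterm : ∀ (J : Matrix (Fin n) (Fin n) ℝ),
        (J *ᵥ v) ⬝ᵥ (M X * M X) *ᵥ v = v ⬝ᵥ ((M X * M X) * J) *ᵥ v := by
      intro J
      rw [mulVec_dot, Matrix.mulVec_mulVec, dot_transpose, Matrix.transpose_mul,
        Matrix.transpose_transpose, Matrix.transpose_mul, hMsym]
    rw [hterm, hterm, ← dotProduct_add, ← dotProduct_add,
      ← Matrix.add_mulVec, ← Matrix.add_mulVec, ← CL, Matrix.mulVec_mulVec]
    congr 1
    noncomm_ring
  rw [add_right_comm, hcollect, hduterm]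
  have := cond1 X v
  linarith
end

section
/- Let μ : ℝ → ℝ be continuously differentiable with μ'(r) > 0 for all r, and let R > 0. Let q, δq : ℝ → ℝ be differentiable and let i_c, i_r, V, I, δi_c, δi_r, δV, δI : ℝ → ℝ satisfy, for all t: q'(t) = i_c(t), V(t) = μ(q(t)), μ(q(t)) = R i_r(t), I(t) = i_c(t) + i_r(t), and δq'(t) = δi_c(t), δV(t) = μ'(q(t)) δq(t), δV(t) = R δi_r(t), δI(t) = δi_c(t) + δi_r(t). Then for all t, the function S(t) := (1/2) δq(t)² satisfies S'(t) ≤ (1/μ'(q(t))) δV(t) δI(t). -/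
/-- Differential passivity of the nonlinear RC circuit from the external voltage `V`
to the external current `I`, with differential storage `S = ½ δq²` and
state-dependent supply rate `(1/μ'(q)) δV δI`. -/
theorem stmt_6 (μ : ℝ → ℝ) (hμ : ContDiff ℝ 1 μ) (hμ' : ∀ r : ℝ, 0 < deriv μ r)
    (R : ℝ) (hR : 0 < R)
    (q δq i_c i_r V I δi_c δi_r δV δI : ℝ → ℝ)
    (hq : ∀ t : ℝ, HasDerivAt q (i_c t) t)
    (hV : ∀ t : ℝ, V t = μ (q t))
    (hvr : ∀ t : ℝ, μ (q t) = R * i_r t)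
    (hI : ∀ t : ℝ, I t = i_c t + i_r t)
    (hδq : ∀ t : ℝ, HasDerivAt δq (δi_c t) t)
    (hδV : ∀ t : ℝ, δV t = deriv μ (q t) * δq t)
    (hδvr : ∀ t : ℝ, δV t = R * δi_r t)
    (hδI : ∀ t : ℝ, δI t = δi_c t + δi_r t)
    (S : ℝ → ℝ) (hS : ∀ t : ℝ, S t = (1 / 2) * (δq t) ^ 2) :
    ∀ t : ℝ, deriv S t ≤ (1 / deriv μ (q t)) * (δV t * δI t) := by
  intro t
  have hSfun : S = fun s => (1 / 2) * (δq s) ^ 2 := funext hS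
  have hSd : HasDerivAt S (δq t * δi_c t) t := by
    rw [hSfun]
    have := ((hδq t).pow 2).const_mul (1 / 2 : ℝ)
    have this : HasDerivAt (fun s => (1 / 2 : ℝ) * (δq s) ^ 2)
        ((1 / 2) * (((2 : ℕ) : ℝ) * δq t ^ (2 - 1) * δi_c t)) t := this
    convert this using 1
    ring
  rw [hSd.deriv]
  have hm := hμ' (q t)
  have hδir : δi_r t = deriv μ (q t) * δq t / R := by
    have := hδvr t
    rw [hδV t] at this
    field_simp at this ⊢
    linarith
  rw [hδV t, hδI t, hδir]
  have key : (1 / deriv μ (q t)) * (deriv μ (q t) * δq t * (δi_c t + deriv μ (q t) * δq t / R))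
      = δq t * δi_c t + deriv μ (q t) * (δq t) ^ 2 / R := by
    field_simp
  rw [key]
  have : 0 ≤ deriv μ (q t) * (δq t) ^ 2 / R := by positivity
  linarith
end

section
/- Let R_r > 0 and R_s > 0 be real constants, let ω_g, ω_s : ℝ → ℝ, and let δφ_r, δφ_s, δi_r, δi_s, δu_s : ℝ → ℂ with δφ_r, δφ_s differentiable. Assume that for all t: δφ_r'(t) = −i ω_g(t) δφ_r(t) − R_r δi_r(t) and δφ_s'(t) = −i ω_s(t) δφ_s(t) − R_s δi_s(t) + δu_s(t). Then the function V(t) := |δφ_r(t)|²/(2 R_r) + |δφ_s(t)|²/(2 R_s) is differentiable and satisfies, for all t: V'(t) = −Re(conj(δφ_r(t)) δi_r(t)) − Re(conj(δφ_s(t)) δi_s(t)) + (1/R_s) Re(conj(δφ_s(t)) δu_s(t)). -/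
open Complex

lemma normsq_deriv' {f : ℝ → ℂ} {f' : ℂ} {t : ℝ} (h : HasDerivAt f f' t) :
    HasDerivAt (fun t => ‖f t‖ ^ 2) (2 * ((starRingEnd ℂ) (f t) * f').re) t := by
  have hre : HasDerivAt (fun t => (f t).re) f'.re t :=
    Complex.reCLM.hasFDerivAt.comp_hasDerivAt t h
  have him : HasDerivAt (fun t => (f t).im) f'.im t :=
    Complex.imCLM.hasFDerivAt.comp_hasDerivAt t h
  have key : HasDerivAt (fun t => (f t).re ^ 2 + (f t).im ^ 2)
      (2 * (f t).re ^ 1 * f'.re + 2 * (f t).im ^ 1 * f'.im) t :=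
    (hre.pow 2).add (him.pow 2)
  have heq : (fun t => ‖f t‖ ^ 2) = fun t => (f t).re ^ 2 + (f t).im ^ 2 := by
    funext x
    rw [← Complex.normSq_eq_norm_sq, Complex.normSq_apply]
    ring
  rw [heq]
  convert key using 1
  simp [Complex.mul_re]
  ring

/-- Uniform differential passivity of the displacement flux dynamics of the induction
motor: along solutions of the displacement rotor/stator flux equations, the storage
`V = |δφ_r|²/(2R_r) + |δφ_s|²/(2R_s)` satisfies the stated energy balance. -/
theorem stmt_7 (R_r R_s : ℝ) (hR_r : 0 < R_r) (hR_s : 0 < R_s)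
    (ω_g ω_s : ℝ → ℝ) (δφ_r δφ_s δi_r δi_s δu_s : ℝ → ℂ)
    (hr : ∀ t : ℝ, HasDerivAt δφ_r
      (-(Complex.I * (ω_g t : ℂ)) * δφ_r t - (R_r : ℂ) * δi_r t) t)
    (hs : ∀ t : ℝ, HasDerivAt δφ_s
      (-(Complex.I * (ω_s t : ℂ)) * δφ_s t - (R_s : ℂ) * δi_s t + δu_s t) t)
    (V : ℝ → ℝ)
    (hV : ∀ t : ℝ, V t = ‖δφ_r t‖ ^ 2 / (2 * R_r) + ‖δφ_s t‖ ^ 2 / (2 * R_s)) :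
    ∀ t : ℝ, HasDerivAt V
      (-((starRingEnd ℂ) (δφ_r t) * δi_r t).re - ((starRingEnd ℂ) (δφ_s t) * δi_s t).re
        + (1 / R_s) * ((starRingEnd ℂ) (δφ_s t) * δu_s t).re) t := by
  intro t
  have hVf : V = fun t => ‖δφ_r t‖ ^ 2 / (2 * R_r) + ‖δφ_s t‖ ^ 2 / (2 * R_s) :=
    funext hV
  rw [hVf]
  have h1 := (normsq_deriv' (hr t)).div_const (2 * R_r)
  have h2 := (normsq_deriv' (hs t)).div_const (2 * R_s)
  convert h1.add h2 using 1
  · exact rfl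
  · exact rfl
  · rfl
  simp only [Complex.mul_re, Complex.mul_im, Complex.sub_re, Complex.sub_im,
    Complex.add_re, Complex.add_im, Complex.neg_re, Complex.neg_im,
    Complex.I_re, Complex.I_im, Complex.ofReal_re, Complex.ofReal_im,
    Complex.conj_re, Complex.conj_im]
  field_simp
  ring
end

section
/- Let L_r, L_s, L_l > 0 be real constants, and let A_r, A_s : ℝ² → ℝ² be positive semidefinite linear maps (i.e., ⟨A_r v, v⟩ ≥ 0 and ⟨A_s v, v⟩ ≥ 0 for all v ∈ ℝ²). For δφ_r, δφ_s ∈ ℝ², define δi_r := A_r δφ_r + (1/L_r + 1/L_l) δφ_r − (1/L_l) δφ_s and δi_s := A_s δφ_s + (1/L_s + 1/L_l) δφ_s − (1/L_l) δφ_r. Then ⟨δi_r, δφ_r⟩ + ⟨δi_s, δφ_s⟩ ≥ (1/L_r) |δφ_r|² + (1/L_s) |δφ_s|²; in particular the left-hand side is strictly positive whenever (δφ_r, δφ_s) ≠ (0, 0). -/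
open scoped RealInnerProductSpace

/-- The displacement flux–current relations of the saturated induction motor define a
(strictly) passive algebraic map: `⟨δi_r, δφ_r⟩ + ⟨δi_s, δφ_s⟩ ≥ (1/L_r)|δφ_r|² +
(1/L_s)|δφ_s|²`, and in particular the left-hand side is strictly positive whenever
`(δφ_r, δφ_s) ≠ (0, 0)`. -/
theorem stmt_8 (L_r L_s L_l : ℝ) (hL_r : 0 < L_r) (hL_s : 0 < L_s) (hL_l : 0 < L_l)
    (A_r A_s : EuclideanSpace ℝ (Fin 2) →ₗ[ℝ] EuclideanSpace ℝ (Fin 2))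
    (hA_r : ∀ v : EuclideanSpace ℝ (Fin 2), 0 ≤ ⟪A_r v, v⟫)
    (hA_s : ∀ v : EuclideanSpace ℝ (Fin 2), 0 ≤ ⟪A_s v, v⟫) :
    ∀ (δφ_r δφ_s δi_r δi_s : EuclideanSpace ℝ (Fin 2)),
      δi_r = A_r δφ_r + (1 / L_r + 1 / L_l) • δφ_r - (1 / L_l) • δφ_s →
      δi_s = A_s δφ_s + (1 / L_s + 1 / L_l) • δφ_s - (1 / L_l) • δφ_r →
      ((1 / L_r) * ‖δφ_r‖ ^ 2 + (1 / L_s) * ‖δφ_s‖ ^ 2 ≤ ⟪δi_r, δφ_r⟫ + ⟪δi_s, δφ_s⟫) ∧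
        ((δφ_r, δφ_s) ≠ (0, 0) → 0 < ⟪δi_r, δφ_r⟫ + ⟪δi_s, δφ_s⟫) := by
  intro r s ir is hir his
  subst hir his
  have har := hA_r r
  have has := hA_s s
  have hd : (0:ℝ) ≤ ‖r - s‖ ^ 2 := sq_nonneg _
  have hexp : ‖r - s‖ ^ 2 = ‖r‖ ^ 2 - 2 * ⟪r, s⟫ + ‖s‖ ^ 2 := by
    rw [norm_sub_sq_real]
  rw [hexp] at hd
  have hrs : ⟪r, s⟫ = ⟪s, r⟫ := real_inner_comm s r
  have hlr : (0:ℝ) < 1 / L_r := by positivity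
  have hls : (0:ℝ) < 1 / L_s := by positivity
  have hll : (0:ℝ) < 1 / L_l := by positivity
  have key : (1 / L_r) * ‖r‖ ^ 2 + (1 / L_s) * ‖s‖ ^ 2 ≤
      ⟪A_r r + (1 / L_r + 1 / L_l) • r - (1 / L_l) • s, r⟫ +
        ⟪A_s s + (1 / L_s + 1 / L_l) • s - (1 / L_l) • r, s⟫ := by
    simp only [inner_sub_left, inner_add_left, real_inner_smul_left,
      real_inner_self_eq_norm_sq]
    nlinarith [mul_nonneg hll.le hd]
  refine ⟨key, fun hne => ?_⟩
  have : (0:ℝ) < (1 / L_r) * ‖r‖ ^ 2 + (1 / L_s) * ‖s‖ ^ 2 := by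
    rcases (not_and_or.mp (by simpa [Prod.ext_iff] using hne)) with h | h
    · have : (0:ℝ) < ‖r‖ ^ 2 := pow_pos (norm_pos_iff.mpr h) 2
      nlinarith [sq_nonneg ‖s‖]
    · have : (0:ℝ) < ‖s‖ ^ 2 := pow_pos (norm_pos_iff.mpr h) 2
      nlinarith [sq_nonneg ‖r‖]
  linarith
end

section
/- Let R_r, R_s, L_r, L_s, L_l > 0 be real constants and ω_g, ω_s : ℝ → ℝ. Let δφ_r, δφ_s, δu_s : ℝ → ℂ with δφ_r, δφ_s differentiable, and for each t let A_r(t), A_s(t) : ℝ² → ℝ² be positive semidefinite linear maps (identifying ℂ with ℝ²). Define δi_r(t) := A_r(t) δφ_r(t) + (1/L_r + 1/L_l) δφ_r(t) − (1/L_l) δφ_s(t) and δi_s(t) := A_s(t) δφ_s(t) + (1/L_s + 1/L_l) δφ_s(t) − (1/L_l) δφ_r(t), and assume δφ_r'(t) = −i ω_g(t) δφ_r(t) − R_r δi_r(t) and δφ_s'(t) = −i ω_s(t) δφ_s(t) − R_s δi_s(t) + δu_s(t) for all t. Then V(t) := |δφ_r(t)|²/(2 R_r) + |δφ_s(t)|²/(2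 R_s) satisfies, for all t: V'(t) ≤ −(1/L_r) |δφ_r(t)|² − (1/L_s) |δφ_s(t)|² + (1/R_s) Re(conj(δφ_s(t)) δu_s(t)). -/
open Complex

/-- Strict uniform differential passivity, from `δu_s` to `δφ_s`, of the virtual flux
system of the saturated induction motor: combining the displacement flux dynamics with
the displacement flux–current relations (with positive semidefinite saturation
Jacobians `A_r(t)`, `A_s(t)`), the storage `V = |δφ_r|²/(2R_r) + |δφ_s|²/(2R_s)`
satisfies the stated strict dissipation inequality. -/
theorem stmt_9 (R_r R_s L_r L_s L_l : ℝ)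
    (hR_r : 0 < R_r) (hR_s : 0 < R_s) (hL_r : 0 < L_r) (hL_s : 0 < L_s) (hL_l : 0 < L_l)
    (ω_g ω_s : ℝ → ℝ) (δφ_r δφ_s δu_s : ℝ → ℂ)
    (A_r A_s : ℝ → (ℂ →ₗ[ℝ] ℂ))
    (hA_r : ∀ (t : ℝ) (z : ℂ), 0 ≤ ((starRingEnd ℂ) z * A_r t z).re)
    (hA_s : ∀ (t : ℝ) (z : ℂ), 0 ≤ ((starRingEnd ℂ) z * A_s t z).re)
    (δi_r δi_s : ℝ → ℂ)
    (hi_r : ∀ t : ℝ, δi_r t =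
      A_r t (δφ_r t) + (1 / L_r + 1 / L_l) • δφ_r t - (1 / L_l) • δφ_s t)
    (hi_s : ∀ t : ℝ, δi_s t =
      A_s t (δφ_s t) + (1 / L_s + 1 / L_l) • δφ_s t - (1 / L_l) • δφ_r t)
    (hr : ∀ t : ℝ, HasDerivAt δφ_r
      (-(Complex.I * (ω_g t : ℂ)) * δφ_r t - (R_r : ℂ) * δi_r t) t)
    (hs : ∀ t : ℝ, HasDerivAt δφ_s
      (-(Complex.I * (ω_s t : ℂ)) * δφ_s t - (R_s : ℂ) * δi_s t + δu_s t) t)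
    (V : ℝ → ℝ)
    (hV : ∀ t : ℝ, V t = ‖δφ_r t‖ ^ 2 / (2 * R_r) + ‖δφ_s t‖ ^ 2 / (2 * R_s)) :
    ∀ t : ℝ, deriv V t ≤ -(1 / L_r) * ‖δφ_r t‖ ^ 2 - (1 / L_s) * ‖δφ_s t‖ ^ 2
      + (1 / R_s) * ((starRingEnd ℂ) (δφ_s t) * δu_s t).re := by
  intro t
  set a := δφ_r t with ha
  set b := δφ_s t with hb
  set u := δu_s t with hu
  set P : ℝ := ((starRingEnd ℂ) a * A_r t a).re with hP
  set Q : ℝ := ((starRingEnd ℂ) b * A_s t b).re with hQ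
  have hDV : HasDerivAt V
      (-P - Q - (1 / L_r) * ‖a‖ ^ 2 - (1 / L_s) * ‖b‖ ^ 2
        - (1 / L_l) * ((a.re - b.re) ^ 2 + (a.im - b.im) ^ 2)
        + (1 / R_s) * ((starRingEnd ℂ) b * u).re) t := by
    have hfun : V = fun τ => ‖δφ_r τ‖ ^ 2 / (2 * R_r) + ‖δφ_s τ‖ ^ 2 / (2 * R_s) :=
      funext hV
    rw [hfun]
    have h1 := ((hr t).norm_sq).div_const (2 * R_r)
    have h2 := ((hs t).norm_sq).div_const (2 * R_s)
    refine (h1.add h2).congr_deriv ?_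
    symm
    rw [hi_r t, hi_s t]
    simp only [← ha, ← hb, ← hu, Complex.inner, Complex.real_smul]
    rw [hP, hQ]
    simp only [Complex.sq_norm, Complex.normSq_apply,
      Complex.mul_re, Complex.mul_im, Complex.add_re, Complex.add_im,
      Complex.sub_re, Complex.sub_im, Complex.neg_re, Complex.neg_im,
      Complex.I_re, Complex.I_im, Complex.ofReal_re, Complex.ofReal_im,
      Complex.conj_re, Complex.conj_im]
    field_simp
    ring
  rw [hDV.deriv]
  have h1 : 0 ≤ P := hA_r t a
  have h2 : 0 ≤ Q := hA_s t b
  have h3 : 0 ≤ (1 / L_l) * ((a.re - b.re) ^ 2 + (a.im - b.im) ^ 2) := by positivity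
  linarith
end

section
/- Let p ≥ 1 and 0 < c₁ ≤ c₂ be real constants. Let x : [0,∞) × [0,1] → ℝⁿ be such that for each t the map s ↦ x(t,s) is continuously differentiable with derivative ∂_s x(t,s), and let S : [0,∞) × [0,1] → [0,∞) satisfy: (i) c₁ |∂_s x(t,s)|^p ≤ S(t,s) ≤ c₂ |∂_s x(t,s)|^p for all (t,s); (ii) for each s, the map t ↦ S(t,s) is nonincreasing. Then for all t ≥ 0: |x(t,1) − x(t,0)| ≤ ∫₀¹ |∂_s x(t,s)| ds ≤ (c₂/c₁)^{1/p} ∫₀¹ |∂_s x(0,s)| ds. -/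
/-- Finsler–Lyapunov bound: if `S(t,s)` squeezes `c₁|∂ₛx|ᵖ ≤ S ≤ c₂|∂ₛx|ᵖ` along a `C¹`
family of curves and is nonincreasing in `t`, then the distance between the endpoint
trajectories at any time `t ≥ 0` is bounded by `(c₂/c₁)^{1/p}` times the initial
length of the connecting family. -/
theorem stmt_12 {n : ℕ} (p c₁ c₂ : ℝ) (hp : 1 ≤ p) (hc₁ : 0 < c₁) (hc : c₁ ≤ c₂)
    (x : ℝ → ℝ → EuclideanSpace ℝ (Fin n)) (δx : ℝ → ℝ → EuclideanSpace ℝ (Fin n))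
    (hderiv : ∀ t : ℝ, 0 ≤ t → ∀ s ∈ Set.Icc (0 : ℝ) 1,
      HasDerivWithinAt (x t) (δx t s) (Set.Icc 0 1) s)
    (hcont : ∀ t : ℝ, 0 ≤ t → ContinuousOn (δx t) (Set.Icc 0 1))
    (S : ℝ → ℝ → ℝ)
    (hS₁ : ∀ t : ℝ, 0 ≤ t → ∀ s ∈ Set.Icc (0 : ℝ) 1,
      c₁ * ‖δx t s‖ ^ p ≤ S t s ∧ S t s ≤ c₂ * ‖δx t s‖ ^ p)
    (hS₂ : ∀ s ∈ Set.Icc (0 : ℝ) 1, AntitoneOn (fun t => S t s) (Set.Ici 0)) :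
    ∀ t : ℝ, 0 ≤ t →
      ‖x t 1 - x t 0‖ ≤ ∫ s in (0 : ℝ)..1, ‖δx t s‖ ∧
        (∫ s in (0 : ℝ)..1, ‖δx t s‖) ≤
          (c₂ / c₁) ^ (1 / p) * ∫ s in (0 : ℝ)..1, ‖δx 0 s‖ := by
  intro t ht
  have hp0 : 0 < p := lt_of_lt_of_le one_pos hp
  have h01 : (0:ℝ) ≤ 1 := zero_le_one
  have huIcc : Set.uIcc (0:ℝ) 1 = Set.Icc 0 1 := Set.uIcc_of_le h01
  -- integrability
  have hint : ∀ u : ℝ, 0 ≤ u → IntervalIntegrable (fun s => ‖δx u s‖) MeasureTheory.volume 0 1 := by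
    intro u hu
    exact ((hcont u hu).norm).intervalIntegrable_of_Icc h01
  have hintδ : ∀ u : ℝ, 0 ≤ u → IntervalIntegrable (δx u) MeasureTheory.volume 0 1 := by
    intro u hu
    exact (hcont u hu).intervalIntegrable_of_Icc h01
  constructor
  · -- FTC
    have hcx : ContinuousOn (x t) (Set.Icc 0 1) := fun s hs =>
      (hderiv t ht s hs).continuousWithinAt
    have heq : (∫ s in (0:ℝ)..1, δx t s) = x t 1 - x t 0 := by
      apply intervalIntegral.integral_eq_sub_of_hasDeriv_right_of_le h01
      · exact hcx
      · intro s hs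
        have hsIcc : s ∈ Set.Icc (0:ℝ) 1 := Set.mem_Icc_of_Ioo hs
        exact (hderiv t ht s hsIcc).mono_of_mem_nhdsWithin
          (Icc_mem_nhdsGT_of_mem ⟨le_of_lt hs.1, hs.2⟩)
      · exact hintδ t ht
    calc ‖x t 1 - x t 0‖ = ‖∫ s in (0:ℝ)..1, δx t s‖ := by rw [heq]
      _ ≤ ∫ s in (0:ℝ)..1, ‖δx t s‖ :=
        intervalIntegral.norm_integral_le_integral_norm h01
  · -- monotone bound
    have hpt : ∀ s ∈ Set.Icc (0:ℝ) 1, ‖δx t s‖ ≤ (c₂ / c₁) ^ (1 / p) * ‖δx 0 s‖ := by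
      intro s hs
      have h1 := (hS₁ t ht s hs).1
      have h2 := (hS₁ 0 le_rfl s hs).2
      have hmono := hS₂ s hs (Set.mem_Ici.2 le_rfl) (Set.mem_Ici.2 ht) ht
      have key : c₁ * ‖δx t s‖ ^ p ≤ c₂ * ‖δx 0 s‖ ^ p :=
        h1.trans (hmono.trans h2)
      have h3 : ‖δx t s‖ ^ p ≤ (c₂ / c₁) * ‖δx 0 s‖ ^ p := by
        rw [div_mul_eq_mul_div, le_div_iff₀ hc₁, mul_comm]
        linarith [key]
      have hc₂ : 0 < c₂ := hc₁.trans_le hc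
      have hr : 0 < c₂ / c₁ := div_pos hc₂ hc₁
      have h4 : ((c₂ / c₁) ^ (1/p)) ^ p = c₂ / c₁ := by
        rw [← Real.rpow_mul hr.le, one_div, inv_mul_cancel₀ hp0.ne', Real.rpow_one]
      have h5 : ((c₂ / c₁) ^ (1/p) * ‖δx 0 s‖) ^ p = (c₂ / c₁) * ‖δx 0 s‖ ^ p := by
        rw [Real.mul_rpow (Real.rpow_nonneg hr.le _) (norm_nonneg _), h4]
      rw [← h5] at h3
      calc ‖δx t s‖ = (‖δx t s‖ ^ p) ^ (1/p) := by
            rw [← Real.rpow_mul (norm_nonneg _), mul_one_div, div_self (ne_of_gt hp0),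
              Real.rpow_one]
        _ ≤ (((c₂ / c₁) ^ (1/p) * ‖δx 0 s‖) ^ p) ^ (1/p) :=
            Real.rpow_le_rpow (by positivity) h3 (by positivity)
        _ = (c₂ / c₁) ^ (1/p) * ‖δx 0 s‖ := by
            rw [← Real.rpow_mul (by positivity), mul_one_div, div_self (ne_of_gt hp0),
              Real.rpow_one]
    calc (∫ s in (0:ℝ)..1, ‖δx t s‖)
        ≤ ∫ s in (0:ℝ)..1, (c₂ / c₁) ^ (1/p) * ‖δx 0 s‖ := by
          apply intervalIntegral.integral_mono_on h01 (hint t ht)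
            ((hint 0 le_rfl).const_mul _)
          exact hpt
      _ = (c₂ / c₁) ^ (1/p) * ∫ s in (0:ℝ)..1, ‖δx 0 s‖ := by
          rw [intervalIntegral.integral_const_mul]
end
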